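/- Let S be a standard Borel space, T : S → S a measurable involution, and K, K' Markov kernels from S to S which both commute with T, meaning Measure.map T (μ.bind K) = (Measure.map T μ).bind K for every probability measure μ (and similarly for K'). For probability measures write d_TV(μ, ν) := sup over measurable sets A of |μ(A) − ν(A)| and μK := μ.bind K. Let M_E be the set of T-invariant probability measures on S, and define d̄(K) := sup_{μ, ν ∈ M_E} d_TV(μK, νK), d̄(K') likewise, and d̄(K∘K') := sup_{μ, ν ∈ M_E} d_TV((μK)K', (νK)K'). Then d̄(K∘K') ≤ d̄(K)·d̄(K'). -/

import Mathlib

open MeasureTheory ProbabilityTheory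

/-- Total-variation distance between two measures, as a supremum over measurable sets. -/
noncomputable def dTV {S : Type*} [MeasurableSpace S] (μ ν : Measure S) : ℝ :=
  ⨆ A : {A : Set S // MeasurableSet A}, |(μ A.1).toReal - (ν A.1).toReal|

open scoped ENNReal

section Helpers
variable {S : Type*} [MeasurableSpace S]

instance nonempty_measurable_sets : Nonempty {A : Set S // MeasurableSet A} :=
  ⟨⟨∅, MeasurableSet.empty⟩⟩

lemma kbind_apply (μ : Measure S) (K : Kernel S S) {A : Set S} (hA : MeasurableSet A) :
    (μ.bind fun s => K s) A = ∫⁻ s, K s A ∂μ :=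
  Measure.bind_apply hA (Kernel.measurable K).aemeasurable

lemma kbind_add (μ ν : Measure S) (K : Kernel S S) :
    ((μ + ν).bind fun s => K s) = (μ.bind fun s => K s) + (ν.bind fun s => K s) := by
  ext A hA
  simp [kbind_apply _ K hA, lintegral_add_measure]

lemma kbind_smul (c : ℝ≥0∞) (μ : Measure S) (K : Kernel S S) :
    ((c • μ).bind fun s => K s) = c • (μ.bind fun s => K s) := by
  ext A hA
  simp [kbind_apply _ K hA, lintegral_smul_measure]

lemma kbind_univ (μ : Measure S) (K : Kernel S S) [IsMarkovKernel K] :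
    (μ.bind fun s => K s) Set.univ = μ Set.univ := by
  rw [kbind_apply _ K MeasurableSet.univ]; simp

lemma isProb_kbind (μ : Measure S) [IsProbabilityMeasure μ] (K : Kernel S S)
    [IsMarkovKernel K] : IsProbabilityMeasure (μ.bind fun s => K s) :=
  ⟨by rw [kbind_univ]; exact measure_univ⟩

lemma toReal_prob_le_one (μ : Measure S) [IsProbabilityMeasure μ] (A : Set S) :
    (μ A).toReal ≤ 1 := by
  have := prob_le_one (μ := μ) (s := A)
  simpa using ENNReal.toReal_mono ENNReal.one_ne_top this

lemma abs_sub_prob_le_one (μ ν : Measure S) [IsProbabilityMeasure μ] [IsProbabilityMeasure ν]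
    (A : Set S) : |(μ A).toReal - (ν A).toReal| ≤ 1 := by
  rw [abs_sub_le_iff]
  constructor <;> nlinarith [toReal_prob_le_one μ A, toReal_prob_le_one ν A,
    ENNReal.toReal_nonneg (a := μ A), ENNReal.toReal_nonneg (a := ν A)]

lemma dTV_bddAbove (μ ν : Measure S) [IsProbabilityMeasure μ] [IsProbabilityMeasure ν] :
    BddAbove (Set.range fun A : {A : Set S // MeasurableSet A} =>
      |(μ A.1).toReal - (ν A.1).toReal|) := by
  refine ⟨1, ?_⟩
  rintro x ⟨A, rfl⟩
  exact abs_sub_prob_le_one μ ν A.1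

lemma abs_le_dTV (μ ν : Measure S) [IsProbabilityMeasure μ] [IsProbabilityMeasure ν]
    {A : Set S} (hA : MeasurableSet A) :
    |(μ A).toReal - (ν A).toReal| ≤ dTV μ ν :=
  le_ciSup (dTV_bddAbove μ ν) ⟨A, hA⟩

lemma dTV_nonneg (μ ν : Measure S) [IsProbabilityMeasure μ] [IsProbabilityMeasure ν] :
    0 ≤ dTV μ ν :=
  le_trans (abs_nonneg _) (abs_le_dTV μ ν MeasurableSet.empty)

lemma dTV_le_one (μ ν : Measure S) [IsProbabilityMeasure μ] [IsProbabilityMeasure ν] :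
    dTV μ ν ≤ 1 :=
  ciSup_le fun A => abs_sub_prob_le_one μ ν A.1

lemma dTV_self (μ : Measure S) : dTV μ μ = 0 := by
  simp [dTV]

end Helpers

/-- Key contraction lemma. -/
lemma dTV_bind_le {S : Type*} [MeasurableSpace S] (T : S → S) (hT : Measurable T)
    (hTT : T ∘ T = id) (K' : Kernel S S) [IsMarkovKernel K'] (dK' : ℝ)
    (hdK'_le : ∀ μ ν : Measure S, IsProbabilityMeasure μ → μ.map T = μ →
      IsProbabilityMeasure ν → ν.map T = ν →
      dTV (μ.bind fun s => K' s) (ν.bind fun s => K' s) ≤ dK')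
    (α β : Measure S) [hαp : IsProbabilityMeasure α] [hβp : IsProbabilityMeasure β]
    (hα : α.map T = α) (hβ : β.map T = β) :
    dTV (α.bind fun s => K' s) (β.bind fun s => K' s) ≤ dTV α β * dK' := by
  obtain ⟨E, hE, hE1, hE2⟩ := hahn_decomposition (μ := α) (ν := β)
  -- order facts
  have hle1 : β.restrict E ≤ α.restrict E := by
    refine Measure.le_iff.2 fun s hs => ?_
    rw [Measure.restrict_apply hs, Measure.restrict_apply hs]
    exact hE1 _ (hs.inter hE) Set.inter_subset_right
  have hle2 : α.restrict Eᶜ ≤ β.restrict Eᶜ := by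
    refine Measure.le_iff.2 fun s hs => ?_
    rw [Measure.restrict_apply hs, Measure.restrict_apply hs]
    exact hE2 _ (hs.inter hE.compl) Set.inter_subset_right
  set lam : Measure S := α.restrict Eᶜ + β.restrict E with hlam
  set A' : Measure S := α.restrict E - β.restrict E with hA'
  set B' : Measure S := β.restrict Eᶜ - α.restrict Eᶜ with hB'
  have hαdec : lam + A' = α := by
    rw [hlam, hA', add_assoc, add_comm (β.restrict E) (α.restrict E - β.restrict E),
      Measure.sub_add_cancel_of_le hle1, add_comm, Measure.restrict_add_restrict_compl hE]
  have hβdec : lam + B' = β := by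
    rw [hlam, hB', add_comm (α.restrict Eᶜ) (β.restrict E), add_assoc,
      add_comm (α.restrict Eᶜ) (β.restrict Eᶜ - α.restrict Eᶜ),
      Measure.sub_add_cancel_of_le hle2, Measure.restrict_add_restrict_compl hE]
  -- total masses
  set m : ℝ≥0∞ := A' Set.univ with hm
  have hlam_fin : lam Set.univ ≠ ∞ := by
    rw [hlam, Measure.add_apply, Measure.restrict_apply_univ, Measure.restrict_apply_univ]
    exact ENNReal.add_ne_top.2 ⟨measure_ne_top _ _, measure_ne_top _ _⟩
  have hmB : B' Set.univ = m := by
    have h1 : lam Set.univ + A' Set.univ = 1 := by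
      rw [← Measure.add_apply, hαdec]; exact measure_univ
    have h2 : lam Set.univ + B' Set.univ = 1 := by
      rw [← Measure.add_apply, hβdec]; exact measure_univ
    rw [hm]
    exact (ENNReal.add_right_inj hlam_fin).1 (h2.trans h1.symm)
  have hm_le : m ≤ 1 := by
    have h1 : lam Set.univ + A' Set.univ = 1 := by
      rw [← Measure.add_apply, hαdec]; exact measure_univ
    rw [hm, ← h1]; exact le_add_self
  have hm_fin : m ≠ ∞ := fun h => by rw [h] at hm_le; exact absurd hm_le (by simp)
  -- value of m
  have hmval : m = α E - β E := by
    rw [hm, hA', Measure.sub_apply MeasurableSet.univ hle1,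
      Measure.restrict_apply_univ, Measure.restrict_apply_univ]
  by_cases hm0 : m = 0
  · -- α = β
    have hA'0 : A' = 0 := Measure.measure_univ_eq_zero.1 (hm ▸ hm0)
    have hB'0 : B' = 0 := Measure.measure_univ_eq_zero.1 (hmB.trans hm0)
    have hαβ : α = β := by rw [← hαdec, ← hβdec, hA'0, hB'0]
    rw [hαβ, dTV_self, dTV_self, zero_mul]
  · -- symmetrized parts
    set At : Measure S := (2 : ℝ≥0∞)⁻¹ • (A' + A'.map T) with hAt
    set Bt : Measure S := (2 : ℝ≥0∞)⁻¹ • (B' + B'.map T) with hBt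
    set Lt : Measure S := (2 : ℝ≥0∞)⁻¹ • (lam + lam.map T) with hLt
    have half2 : ((2 : ℝ≥0∞)⁻¹ * 2) = 1 := ENNReal.inv_mul_cancel two_ne_zero ENNReal.ofNat_ne_top
    have hαdec2 : Lt + At = α := by
      rw [hLt, hAt, ← smul_add]
      have h1 : lam + A' + (lam.map T + A'.map T) = α + α := by
        rw [← Measure.map_add _ _ hT, hαdec, hα]
      have h2 : lam + lam.map T + (A' + A'.map T) = α + α := by
        rw [← h1]; abel
      rw [h2, ← two_smul ℝ≥0∞ α, smul_smul, half2, one_smul]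
    have hβdec2 : Lt + Bt = β := by
      rw [hLt, hBt, ← smul_add]
      have h1 : lam + B' + (lam.map T + B'.map T) = β + β := by
        rw [← Measure.map_add _ _ hT, hβdec, hβ]
      have h2 : lam + lam.map T + (B' + B'.map T) = β + β := by
        rw [← h1]; abel
      rw [h2, ← two_smul ℝ≥0∞ β, smul_smul, half2, one_smul]
    have hmap_univ : ∀ X : Measure S, X.map T Set.univ = X Set.univ := fun X => by
      rw [Measure.map_apply hT MeasurableSet.univ, Set.preimage_univ]
    have hAt_univ : At Set.univ = m := by
      rw [hAt, Measure.smul_apply, Measure.add_apply, hmap_univ, smul_eq_mul, ← hm,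
        ← two_mul, ← mul_assoc, half2, one_mul]
    have hBt_univ : Bt Set.univ = m := by
      rw [hBt, Measure.smul_apply, Measure.add_apply, hmap_univ, smul_eq_mul, hmB,
        ← two_mul, ← mul_assoc, half2, one_mul]
    have hmapmap : ∀ X : Measure S, (X.map T).map T = X := fun X => by
      rw [Measure.map_map hT hT, hTT, Measure.map_id]
    have hAtT : At.map T = At := by
      rw [hAt, Measure.map_smul, Measure.map_add _ _ hT, hmapmap, add_comm (A'.map T)]
    have hBtT : Bt.map T = Bt := by
      rw [hBt, Measure.map_smul, Measure.map_add _ _ hT, hmapmap, add_comm (B'.map T)]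
    set p : Measure S := m⁻¹ • At with hp
    set q : Measure S := m⁻¹ • Bt with hq
    have hminv : m⁻¹ * m = 1 := ENNReal.inv_mul_cancel hm0 hm_fin
    have hpprob : IsProbabilityMeasure p :=
      ⟨by rw [hp, Measure.smul_apply, smul_eq_mul, hAt_univ, hminv]⟩
    have hqprob : IsProbabilityMeasure q :=
      ⟨by rw [hq, Measure.smul_apply, smul_eq_mul, hBt_univ, hminv]⟩
    have hpT : p.map T = p := by rw [hp, Measure.map_smul, hAtT]
    have hqT : q.map T = q := by rw [hq, Measure.map_smul, hBtT]
    have hAt_eq : At = m • p := by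
      rw [hp, smul_smul, ENNReal.mul_inv_cancel hm0 hm_fin, one_smul]
    have hBt_eq : Bt = m • q := by
      rw [hq, smul_smul, ENNReal.mul_inv_cancel hm0 hm_fin, one_smul]
    have hm_le_dTV : m.toReal ≤ dTV α β := by
      have : m.toReal = (α E).toReal - (β E).toReal := by
        rw [hmval, ENNReal.toReal_sub_of_le (hE1 E hE subset_rfl) (measure_ne_top α E)]
      rw [this]
      exact le_trans (le_abs_self _) (abs_le_dTV α β hE)
    haveI hpK : IsProbabilityMeasure (p.bind fun s => K' s) := isProb_kbind p K'
    haveI hqK : IsProbabilityMeasure (q.bind fun s => K' s) := isProb_kbind q K'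
    refine ciSup_le fun A => ?_
    obtain ⟨A, hA⟩ := A
    have hLt_univ_le : Lt Set.univ ≤ 1 := by
      have h1 : Lt Set.univ + At Set.univ = 1 := by
        rw [← Measure.add_apply, hαdec2]; exact measure_univ
      rw [← h1]; exact le_self_add
    have hLtfin : (Lt.bind fun s => K' s) A ≠ ∞ := by
      refine ne_top_of_le_ne_top ENNReal.one_ne_top ?_
      calc (Lt.bind fun s => K' s) A ≤ (Lt.bind fun s => K' s) Set.univ :=
            measure_mono (Set.subset_univ A)
        _ = Lt Set.univ := kbind_univ Lt K'
        _ ≤ 1 := hLt_univ_le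
    have hpfin : m * ((p.bind fun s => K' s) A) ≠ ∞ :=
      ENNReal.mul_ne_top hm_fin (measure_ne_top _ A)
    have hqfin : m * ((q.bind fun s => K' s) A) ≠ ∞ :=
      ENNReal.mul_ne_top hm_fin (measure_ne_top _ A)
    have hαA : (α.bind fun s => K' s) A
        = (Lt.bind fun s => K' s) A + m * ((p.bind fun s => K' s) A) := by
      rw [← hαdec2, kbind_add, Measure.add_apply, hAt_eq, kbind_smul m p K',
        Measure.smul_apply m, smul_eq_mul]
    have hβA : (β.bind fun s => K' s) A
        = (Lt.bind fun s => K' s) A + m * ((q.bind fun s => K' s) A) := by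
      rw [← hβdec2, kbind_add, Measure.add_apply, hBt_eq, kbind_smul m q K',
        Measure.smul_apply m, smul_eq_mul]
    have hkey : ((α.bind fun s => K' s) A).toReal - ((β.bind fun s => K' s) A).toReal
        = m.toReal * (((p.bind fun s => K' s) A).toReal
            - ((q.bind fun s => K' s) A).toReal) := by
      rw [hαA, hβA, ENNReal.toReal_add hLtfin hpfin, ENNReal.toReal_add hLtfin hqfin,
        ENNReal.toReal_mul, ENNReal.toReal_mul]
      ring
    calc |((α.bind fun s => K' s) A).toReal - ((β.bind fun s => K' s) A).toReal|
        = m.toReal * |((p.bind fun s => K' s) A).toReal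
            - ((q.bind fun s => K' s) A).toReal| := by
          rw [hkey, abs_mul, abs_of_nonneg ENNReal.toReal_nonneg]
      _ ≤ dTV α β * dK' := by
          refine mul_le_mul hm_le_dTV ?_ (abs_nonneg _) (dTV_nonneg α β)
          exact le_trans (abs_le_dTV _ _ hA) (hdK'_le p q hpprob hpT hqprob hqT)

/-- Abstract submultiplicativity of Lemma B.2: for Markov kernels `K, K'` commuting with a
measurable involution `T` on a standard Borel space, the worst-case symmetric TV distances
satisfy `d̄(K∘K') ≤ d̄(K) · d̄(K')`, the suprema being over `T`-invariant probability
measures. -/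
theorem dbar_submultiplicative
    {S : Type*} [MeasurableSpace S] [StandardBorelSpace S]
    (T : S → S) (hT : Measurable T) (hTT : T ∘ T = id)
    (K K' : Kernel S S) [IsMarkovKernel K] [IsMarkovKernel K']
    (hK : ∀ μ : Measure S, IsProbabilityMeasure μ →
      (μ.bind (fun s => K s)).map T = (μ.map T).bind (fun s => K s))
    (hK' : ∀ μ : Measure S, IsProbabilityMeasure μ →
      (μ.bind (fun s => K' s)).map T = (μ.map T).bind (fun s => K' s))
    (dK dK' dKK' : ℝ)
    (hdK : dK = ⨆ p : {μ : Measure S // IsProbabilityMeasure μ ∧ μ.map T = μ} ×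
          {μ : Measure S // IsProbabilityMeasure μ ∧ μ.map T = μ},
        dTV (p.1.1.bind (fun s => K s)) (p.2.1.bind (fun s => K s)))
    (hdK' : dK' = ⨆ p : {μ : Measure S // IsProbabilityMeasure μ ∧ μ.map T = μ} ×
          {μ : Measure S // IsProbabilityMeasure μ ∧ μ.map T = μ},
        dTV (p.1.1.bind (fun s => K' s)) (p.2.1.bind (fun s => K' s)))
    (hdKK' : dKK' = ⨆ p : {μ : Measure S // IsProbabilityMeasure μ ∧ μ.map T = μ} ×
          {μ : Measure S // IsProbabilityMeasure μ ∧ μ.map T = μ},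
        dTV ((p.1.1.bind (fun s => K s)).bind (fun s => K' s))
            ((p.2.1.bind (fun s => K s)).bind (fun s => K' s))) :
    dKK' ≤ dK * dK' := by
  rcases isEmpty_or_nonempty S with hS | hS
  · -- no probability measures at all
    haveI : IsEmpty {μ : Measure S // IsProbabilityMeasure μ ∧ Measure.map T μ = μ} := by
      refine ⟨fun p => ?_⟩
      have h1 : p.1 Set.univ = 1 := p.2.1.measure_univ
      rw [Set.univ_eq_empty_iff.2 hS, measure_empty] at h1
      exact zero_ne_one h1
    simp only [hdK, hdK', hdKK', iSup_of_empty', Real.sSup_empty, mul_zero]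
    exact le_refl 0
  · -- construct a T-invariant probability measure
    obtain ⟨s⟩ := hS
    set μ0 : Measure S := (2 : ℝ≥0∞)⁻¹ • (Measure.dirac s + Measure.dirac (T s)) with hμ0
    have half2 : ((2 : ℝ≥0∞)⁻¹ * 2) = 1 := ENNReal.inv_mul_cancel two_ne_zero ENNReal.ofNat_ne_top
    have hμ0p : IsProbabilityMeasure μ0 := by
      constructor
      rw [hμ0, Measure.smul_apply, Measure.add_apply, smul_eq_mul]
      simp [← two_mul, ← mul_assoc, half2]
    have hμ0T : μ0.map T = μ0 := by
      rw [hμ0, Measure.map_smul, Measure.map_add _ _ hT, Measure.map_dirac' hT,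
        Measure.map_dirac' hT]
      have : T (T s) = s := congrFun hTT s
      rw [this, add_comm]
    haveI hne : Nonempty {μ : Measure S // IsProbabilityMeasure μ ∧ Measure.map T μ = μ} :=
      ⟨⟨μ0, hμ0p, hμ0T⟩⟩
    -- bounds on the suprema
    have hbddK' : BddAbove (Set.range fun p :
        {μ : Measure S // IsProbabilityMeasure μ ∧ Measure.map T μ = μ} ×
        {μ : Measure S // IsProbabilityMeasure μ ∧ Measure.map T μ = μ} =>
        dTV (p.1.1.bind fun s => K' s) (p.2.1.bind fun s => K' s)) := by
      refine ⟨1, ?_⟩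
      rintro x ⟨p, rfl⟩
      haveI := p.1.2.1; haveI := p.2.2.1
      haveI := isProb_kbind p.1.1 K'; haveI := isProb_kbind p.2.1 K'
      exact dTV_le_one _ _
    have hbddK : BddAbove (Set.range fun p :
        {μ : Measure S // IsProbabilityMeasure μ ∧ Measure.map T μ = μ} ×
        {μ : Measure S // IsProbabilityMeasure μ ∧ Measure.map T μ = μ} =>
        dTV (p.1.1.bind fun s => K s) (p.2.1.bind fun s => K s)) := by
      refine ⟨1, ?_⟩
      rintro x ⟨p, rfl⟩
      haveI := p.1.2.1; haveI := p.2.2.1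
      haveI := isProb_kbind p.1.1 K; haveI := isProb_kbind p.2.1 K
      exact dTV_le_one _ _
    have hdK'_le : ∀ μ ν : Measure S, IsProbabilityMeasure μ → μ.map T = μ →
        IsProbabilityMeasure ν → ν.map T = ν →
        dTV (μ.bind fun s => K' s) (ν.bind fun s => K' s) ≤ dK' := by
      intro μ ν hμ1 hμ2 hν1 hν2
      rw [hdK']
      exact le_ciSup hbddK' (⟨⟨μ, hμ1, hμ2⟩, ⟨ν, hν1, hν2⟩⟩ :
        {μ : Measure S // IsProbabilityMeasure μ ∧ Measure.map T μ = μ} ×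
        {μ : Measure S // IsProbabilityMeasure μ ∧ Measure.map T μ = μ})
    have hdK'_nonneg : 0 ≤ dK' := by
      haveI := isProb_kbind μ0 K'
      exact le_trans (dTV_nonneg (μ0.bind fun s => K' s) (μ0.bind fun s => K' s))
        (hdK'_le μ0 μ0 hμ0p hμ0T hμ0p hμ0T)
    rw [hdKK']
    refine ciSup_le fun p => ?_
    obtain ⟨⟨μ, hμ1, hμ2⟩, ⟨ν, hν1, hν2⟩⟩ := p
    haveI := hμ1; haveI := hν1
    haveI := isProb_kbind μ K; haveI := isProb_kbind ν K
    have hμKT : (μ.bind fun s => K s).map T = μ.bind fun s => K s := by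
      rw [hK μ hμ1, hμ2]
    have hνKT : (ν.bind fun s => K s).map T = ν.bind fun s => K s := by
      rw [hK ν hν1, hν2]
    have h1 := dTV_bind_le T hT hTT K' dK' hdK'_le
      (μ.bind fun s => K s) (ν.bind fun s => K s) hμKT hνKT
    refine h1.trans ?_
    have h2 : dTV (μ.bind fun s => K s) (ν.bind fun s => K s) ≤ dK := by
      rw [hdK]
      exact le_ciSup hbddK (⟨⟨μ, hμ1, hμ2⟩, ⟨ν, hν1, hν2⟩⟩ :
        {μ : Measure S // IsProbabilityMeasure μ ∧ Measure.map T μ = μ} ×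
        {μ : Measure S // IsProbabilityMeasure μ ∧ Measure.map T μ = μ})
    exact mul_le_mul_of_nonneg_right h2 hdK'_nonneg
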